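/- Let q = 2^m, g a primitive element of GF(q), and h a divisor of 2^{m/2} + 1 (m even, k = m/2). Then ∑_{x ∈ GF(q)} (-1)^{Tr_m(a x^h)} equals (h-1)·2^k if a = g^{hi} for some integer i, and equals -2^k otherwise, for any a ∈ GF(q)*. -/

import Mathlib

open Finset in
lemma count_mod_aux (t h r : ℕ) (ht : 0 < t) (hr : r < t) :
    ((Finset.range (h * t)).filter (fun j => j % t = r)).card = h := by
  have himg : (Finset.range (h * t)).filter (fun j => j % t = r)
      = (Finset.range h).image (fun l => t * l + r) := by
    ext j
    simp only [mem_filter, mem_range, mem_image]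
    constructor
    · rintro ⟨hlt, hmod⟩
      refine ⟨j / t, Nat.div_lt_of_lt_mul (by rwa [mul_comm] at hlt), ?_⟩
      have := Nat.div_add_mod j t
      omega
    · rintro ⟨l, hl, rfl⟩
      constructor
      · calc t * l + r < t * l + t := by omega
          _ = t * (l + 1) := by ring
          _ ≤ t * h := Nat.mul_le_mul_left t hl
          _ = h * t := mul_comm t h
      · rw [Nat.mul_add_mod, Nat.mod_eq_of_lt hr]
  rw [himg, Finset.card_image_of_injective _
    (fun x y hxy => Nat.eq_of_mul_eq_mul_left ht (by omega)), Finset.card_range]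

open Finset in
theorem exp_sum_power_residue (m k : ℕ) (hm : m = 2 * k) (hk0 : 0 < k)
    (F : Type) [Field F] [Fintype F] [Algebra (ZMod 2) F]
    (hF : Fintype.card F = 2 ^ m)
    (g : F) (hg : ∀ x : F, x ≠ 0 → ∃ n : ℕ, x = g ^ n)
    (h : ℕ) (hh : h ∣ 2 ^ k + 1) (a : F) (ha : a ≠ 0) :
    ((∃ i : ℕ, a = g ^ (h * i)) →
      ∑ x : F, (if Algebra.trace (ZMod 2) F (a * x ^ h) = 0 then (1 : ℤ) else -1)
        = ((h : ℤ) - 1) * 2 ^ k) ∧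
    ((¬ ∃ i : ℕ, a = g ^ (h * i)) →
      ∑ x : F, (if Algebra.trace (ZMod 2) F (a * x ^ h) = 0 then (1 : ℤ) else -1)
        = -(2 ^ k)) := by
  classical
  subst hm
  -- numerology
  set N1 : ℕ := 2 ^ k - 1 with hN1
  set N2 : ℕ := 2 ^ k + 1 with hN2
  set n : ℕ := 2 ^ (2 * k) - 1 with hn
  have hx1 : 1 ≤ 2 ^ k := Nat.one_le_two_pow
  have hq4 : 4 ≤ 2 ^ (2 * k) := by
    calc (4:ℕ) = 2 ^ 2 := rfl
    _ ≤ 2 ^ (2 * k) := Nat.pow_le_pow_right (by norm_num) (by omega)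
  have hqq : 2 ^ (2 * k) = 2 ^ k * 2 ^ k := by rw [two_mul, pow_add]
  have hnN : n = N1 * N2 := by
    have : N1 * N2 = 2 ^ k * 2 ^ k - 1 := by
      rw [hN1, hN2, Nat.sub_mul, Nat.mul_add, Nat.mul_one, one_mul]
      omega
    rw [hn, hqq, this]
  have hn0 : 0 < n := by omega
  have hN10 : 0 < N1 := by simp [hN1]; omega
  have hN20 : 0 < N2 := by omega
  have h0 : 0 < h := Nat.pos_of_dvd_of_pos hh hN20
  have hhn : h ∣ n := hnN ▸ hh.mul_left N1
  -- coprimality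
  have hodd : ¬ (2 ∣ N1) := by
    have : 2 ∣ 2 ^ k := dvd_pow_self 2 hk0.ne'
    omega
  have cop : Nat.Coprime N2 N1 := by
    have hd : Nat.gcd N2 N1 ∣ 2 := by
      have h2 : N2 - N1 = 2 := by omega
      have := Nat.dvd_sub (Nat.gcd_dvd_left N2 N1) (Nat.gcd_dvd_right N2 N1)
      rwa [h2] at this
    rcases (Nat.dvd_prime Nat.prime_two).mp hd with h1 | h2
    · exact h1
    · exact absurd (h2 ▸ Nat.gcd_dvd_right N2 N1) hodd
  have coph : Nat.Coprime h N1 := Nat.Coprime.coprime_dvd_left hh cop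
  -- characteristic
  haveI : CharP F 2 := charP_of_injective_algebraMap (algebraMap (ZMod 2) F).injective 2
  haveI : Fact (Nat.Prime 2) := ⟨Nat.prime_two⟩
  have hpowq : ∀ x : F, x ^ (2 ^ (2 * k)) = x := by
    intro x
    have := FiniteField.pow_card x
    rwa [hF] at this
  -- generator
  have hg0 : g ≠ 0 := by
    intro hgz
    have hall : ∀ x : F, x = 0 ∨ x = 1 := by
      intro x
      by_cases hx : x = 0
      · exact Or.inl hx
      · obtain ⟨nx, hnx⟩ := hg x hx
        rcases Nat.eq_zero_or_pos nx with h0' | h0'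
        · right; rw [hnx, h0', pow_zero]
        · exfalso; apply hx; rw [hnx, hgz, zero_pow h0'.ne']
    have : (Finset.univ : Finset F) ⊆ {0, 1} := fun x _ => by
      rcases hall x with h' | h' <;> simp [h']
    have hcard := Finset.card_le_card this
    rw [Finset.card_univ, hF] at hcard
    have : ({0, 1} : Finset F).card ≤ 2 := Finset.card_insert_le 0 {1} |>.trans (by simp)
    omega
  set gu : Fˣ := Units.mk0 g hg0 with hgu
  have hgupow : ∀ e : ℕ, ((gu ^ e : Fˣ) : F) = g ^ e := fun e => by
    rw [Units.val_pow_eq_pow_val]; rfl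
  have hord : orderOf gu = n := by
    have hmem : ∀ x : Fˣ, x ∈ Subgroup.zpowers gu := by
      intro x
      obtain ⟨nx, hnx⟩ := hg (x : F) (Units.ne_zero x)
      have : x = gu ^ nx := Units.ext (by rw [hgupow]; exact hnx)
      exact this ▸ Subgroup.npow_mem_zpowers gu nx
    have := orderOf_eq_card_of_forall_mem_zpowers hmem
    rw [this, Nat.card_eq_fintype_card, Fintype.card_units, hF]
  have hgexp : ∀ e1 e2 : ℕ, g ^ e1 = g ^ e2 ↔ e1 ≡ e2 [MOD n] := by
    intro e1 e2
    rw [← hord, ← pow_eq_pow_iff_modEq]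
    constructor
    · intro he; exact Units.ext (by rw [hgupow, hgupow]; exact he)
    · intro he; rw [← hgupow, ← hgupow, he]
  have hgne : ∀ e : ℕ, g ^ e ≠ 0 := fun e => pow_ne_zero e hg0
  -- trace facts
  have htr2 : ∀ y : F, Algebra.trace (ZMod 2) F (y ^ 2) = Algebra.trace (ZMod 2) F y := by
    intro y
    let e : F ≃ₐ[ZMod 2] F := AlgEquiv.ofRingEquiv (f := frobeniusEquiv F 2)
      (fun r => by
        have h1 : (frobeniusEquiv F 2) (algebraMap (ZMod 2) F r)
            = (algebraMap (ZMod 2) F r) ^ 2 := rfl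
        have h2 : r ^ 2 = r := ZMod.pow_card r
        rw [h1, ← map_pow, h2])
    have heq := Algebra.trace_eq_of_algEquiv e y
    have hex : e y = y ^ 2 := rfl
    rw [← hex, heq]
  have htrk : ∀ (j : ℕ) (y : F),
      Algebra.trace (ZMod 2) F (y ^ (2 ^ j)) = Algebra.trace (ZMod 2) F y := by
    intro j
    induction j with
    | zero => intro y; simp
    | succ j ih =>
        intro y
        have hy : y ^ (2 ^ (j+1)) = (y ^ (2 ^ j)) ^ 2 := by
          rw [← pow_mul, pow_succ]
        rw [hy, htr2, ih]
  have hnd : ∀ c : F, c ≠ 0 → ∃ b, Algebra.trace (ZMod 2) F (c * b) ≠ 0 := by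
    haveI : FiniteDimensional (ZMod 2) F := Module.Finite.of_finite
    intro c hc
    have htr := (traceForm_nondegenerate (ZMod 2) F).1 c
    simp_rw [Algebra.traceForm_apply] at htr
    by_contra! hf
    exact hc (htr hf)
  have hfadd : ∀ x y : F, (x + y) ^ (2 ^ k) = x ^ (2 ^ k) + y ^ (2 ^ k) := fun x y =>
    add_pow_char_pow x y 2 k
  have hq2 : ∀ x : F, (x ^ (2 ^ k)) ^ (2 ^ k) = x := by
    intro x
    rw [← pow_mul, ← hqq, hpowq]
  -- the subfield, as a finset
  set Kf : Finset F := univ.filter (fun z => z ^ (2 ^ k) = z) with hKf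
  have hKmem : ∀ z : F, z ∈ Kf ↔ z ^ (2 ^ k) = z := by
    intro z; simp [hKf]
  have h0K : (0 : F) ∈ Kf := (hKmem 0).mpr (zero_pow (by positivity))
  set Kimg : Finset F := (range N1).image (fun j => g ^ (N2 * j)) with hKimg
  have hmodsmall' : ∀ M j1 j2 : ℕ, j1 ≡ j2 [MOD M] → j1 < M → j2 < M → j1 = j2 := by
    intro M j1 j2 hj hl1 hl2
    have := hj
    unfold Nat.ModEq at this
    rwa [Nat.mod_eq_of_lt hl1, Nat.mod_eq_of_lt hl2] at this
  have hmodsmall : ∀ j1 j2 : ℕ, j1 ≡ j2 [MOD N1] → j1 < N1 → j2 < N1 → j1 = j2 :=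
    hmodsmall' N1
  have hinjK : ∀ j1 ∈ range N1, ∀ j2 ∈ range N1,
      g ^ (N2 * j1) = g ^ (N2 * j2) → j1 = j2 := by
    intro j1 h1 j2 h2 heq
    rw [hgexp] at heq
    rw [hnN] at heq
    have heq1 : N2 * j1 ≡ N2 * j2 [MOD N1] := Nat.ModEq.of_mul_right N2 heq
    have := Nat.ModEq.cancel_left_of_coprime (by rw [Nat.coprime_comm] at cop; exact cop) heq1
    exact hmodsmall _ _ this (mem_range.mp h1) (mem_range.mp h2)
  have hKeq : Kf = insert 0 Kimg := by
    ext z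
    rw [hKmem, Finset.mem_insert, hKimg, Finset.mem_image]
    constructor
    · intro hz
      by_cases hz0 : z = 0
      · exact Or.inl hz0
      · right
        obtain ⟨nz, hnz⟩ := hg z hz0
        rw [hnz, ← pow_mul, hgexp] at hz
        have hdvd : (↑n : ℤ) ∣ (nz : ℤ) * N1 := by
          have hdd := hz.dvd
          have hcast : (↑nz : ℤ) - ↑(nz * 2 ^ k) = -(↑nz * ↑N1) := by
            push_cast [hN1, Nat.cast_sub hx1]
            ring
          rw [hcast] at hdd
          exact (dvd_neg.mp hdd)
        have hN2dvd : (N2 : ℤ) ∣ (nz : ℤ) := by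
          have hnint : (↑n : ℤ) = ↑N1 * ↑N2 := by rw [hnN]; push_cast; ring
          rw [hnint] at hdvd
          rcases hdvd with ⟨c, hc⟩
          refine ⟨c, ?_⟩
          have hN1ne : (N1 : ℤ) ≠ 0 := by exact_mod_cast hN10.ne'
          have hcc : (N1 : ℤ) * (nz : ℤ) = (N1 : ℤ) * ((N2 : ℤ) * c) := by
            linear_combination hc
          exact mul_left_cancel₀ hN1ne hcc
        have hN2dvdn : N2 ∣ nz := by exact_mod_cast hN2dvd
        obtain ⟨j0, hj0⟩ := hN2dvdn
        refine ⟨j0 % N1, mem_range.mpr (Nat.mod_lt _ hN10), ?_⟩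
        rw [hnz, hj0, hgexp, hnN]
        have h5 : N2 * (j0 % N1) ≡ N2 * j0 [MOD N2 * N1] :=
          Nat.ModEq.mul_left' N2 (Nat.mod_modEq j0 N1)
        rwa [mul_comm N2 N1] at h5
    · rintro (rfl | ⟨j1, hj1, rfl⟩)
      · exact zero_pow (by positivity)
      · rw [← pow_mul, hgexp, hnN]
        have : N1 * N2 ∣ N2 * j1 * 2 ^ k - N2 * j1 := by
          obtain ⟨d, hd1, hd2⟩ : ∃ d, 2 ^ k = 1 + d ∧ N1 = d := ⟨2 ^ k - 1, by omega, by rw [hN1]⟩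
          have heq2 : N2 * j1 * 2 ^ k - N2 * j1 = (N1 * N2) * j1 := by
            rw [hd2, hd1]
            exact Nat.sub_eq_of_eq_add (by ring)
          rw [heq2]
          exact Dvd.intro j1 rfl
        have hle : N2 * j1 ≤ N2 * j1 * 2 ^ k := Nat.le_mul_of_pos_right _ (by positivity)
        exact ((Nat.modEq_iff_dvd' hle).mpr this).symm
  have h0nimg : (0 : F) ∉ Kimg := by
    intro h0'
    rw [hKimg, Finset.mem_image] at h0'
    obtain ⟨j1, _, hj⟩ := h0'
    exact hgne (N2 * j1) hj
  have hKcard : Kf.card = 2 ^ k := by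
    rw [hKeq, Finset.card_insert_of_notMem h0nimg, hKimg,
      Finset.card_image_of_injOn (fun x hx y hy => hinjK x hx y hy), Finset.card_range]
    omega
  -- the image of w ↦ w + w^(2^k) is exactly Kf, hence trace vanishes on Kf
  have h2z : (2 : F) = 0 := CharTwo.two_eq_zero
  have hρK : ∀ w : F, w + w ^ (2 ^ k) ∈ Kf := by
    intro w
    rw [hKmem, hfadd, hq2, add_comm]
  have himgρ : Finset.image (fun w : F => w + w ^ (2 ^ k)) univ = Kf := by
    apply Finset.eq_of_subset_of_card_le
    · intro z hz
      rw [Finset.mem_image] at hz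
      obtain ⟨w, _, rfl⟩ := hz
      exact hρK w
    · -- card Kf ≤ card image
      have hfib : ∀ z ∈ Finset.image (fun w : F => w + w ^ (2 ^ k)) univ,
          (univ.filter (fun w : F => w + w ^ (2 ^ k) = z)).card = 2 ^ k := by
        intro z hz
        rw [Finset.mem_image] at hz
        obtain ⟨w0, _, rfl⟩ := hz
        have hfeq : univ.filter (fun w : F => w + w ^ (2 ^ k) = w0 + w0 ^ (2 ^ k))
            = Kf.image (fun t => w0 + t) := by
          ext w
          rw [Finset.mem_filter, Finset.mem_image]
          constructor
          · rintro ⟨-, hw⟩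
            refine ⟨w + w0, ?_, by rw [← add_assoc, add_comm w0 w, add_assoc,
              CharTwo.add_self_eq_zero, add_zero]⟩
            rw [hKmem, hfadd]
            have heq' : w ^ (2 ^ k) + w0 ^ (2 ^ k) = w + w0 := by
              linear_combination hw + (w0 ^ (2 ^ k) - w) * h2z
            rw [heq']
          · rintro ⟨t, ht, rfl⟩
            refine ⟨Finset.mem_univ _, ?_⟩
            rw [hfadd, (hKmem t).mp ht]
            linear_combination t * h2z
        rw [hfeq, Finset.card_image_of_injective _ (fun x y hxy => by
          have := hxy; simpa using this), hKcard]
      have hcardsum := Finset.card_eq_sum_card_fiberwise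
        (f := fun w : F => w + w ^ (2 ^ k)) (s := univ) (t := Finset.image (fun w : F => w + w ^ (2 ^ k)) univ)
        (fun x _ => Finset.mem_image_of_mem _ (Finset.mem_univ x))
      rw [Finset.sum_congr rfl hfib, Finset.sum_const, Finset.card_univ, hF, smul_eq_mul] at hcardsum
      have himgcard : (Finset.image (fun w : F => w + w ^ (2 ^ k)) univ).card = 2 ^ k := by
        have h2k : (2:ℕ) ^ k ≠ 0 := by positivity
        have := hcardsum
        rw [hqq] at this
        exact Nat.eq_of_mul_eq_mul_right (by positivity) this.symm
      rw [hKcard, himgcard]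
  have htrK : ∀ z ∈ Kf, Algebra.trace (ZMod 2) F z = 0 := by
    intro z hz
    rw [← himgρ, Finset.mem_image] at hz
    obtain ⟨w, _, rfl⟩ := hz
    rw [map_add, htrk k w, CharTwo.add_self_eq_zero]
  -- the kernel lemma
  have hD : ∀ c : F, (∀ s ∈ Kf, Algebra.trace (ZMod 2) F (c * s) = 0) → c ^ (2 ^ k) = c := by
    intro c hc
    have key : ∀ w : F, Algebra.trace (ZMod 2) F ((c + c ^ (2 ^ k)) * w) = 0 := by
      intro w
      have h1 := hc (w + w ^ (2 ^ k)) (hρK w)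
      have h2 : Algebra.trace (ZMod 2) F (c * w ^ (2 ^ k))
          = Algebra.trace (ZMod 2) F (c ^ (2 ^ k) * w) := by
        have h3 : (c ^ (2 ^ k) * w) ^ (2 ^ k) = c * w ^ (2 ^ k) := by
          rw [mul_pow, hq2]
        rw [← h3, htrk k]
      calc Algebra.trace (ZMod 2) F ((c + c ^ (2 ^ k)) * w)
          = Algebra.trace (ZMod 2) F (c * w) + Algebra.trace (ZMod 2) F (c ^ (2 ^ k) * w) := by
            rw [add_mul, map_add]
        _ = Algebra.trace (ZMod 2) F (c * w) + Algebra.trace (ZMod 2) F (c * w ^ (2 ^ k)) := by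
            rw [h2]
        _ = Algebra.trace (ZMod 2) F (c * (w + w ^ (2 ^ k))) := by rw [mul_add, map_add]
        _ = 0 := h1
    by_contra hne
    have hcc : c + c ^ (2 ^ k) ≠ 0 := by
      intro heq
      apply hne
      have := eq_neg_of_add_eq_zero_right heq
      rwa [CharTwo.neg_eq] at this
    obtain ⟨b, hb⟩ := hnd _ hcc
    exact hb (key b)
  -- balance lemma on Kf
  have hflip : ∀ u : ZMod 2, u ≠ 0 → u = 1 := by
    intro u hu
    fin_cases u
    · exact absurd rfl hu
    · rfl
  have hbal : ∀ c : F, ∀ s0 ∈ Kf, Algebra.trace (ZMod 2) F (c * s0) ≠ 0 →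
      (∑ s ∈ Kf, (if Algebra.trace (ZMod 2) F (c * s) = 0 then (1:ℤ) else -1)) = 0 := by
    intro c s0 hs0 hcs0
    have hKadd : ∀ x ∈ Kf, ∀ y ∈ Kf, x + y ∈ Kf := by
      intro x hx y hy
      rw [hKmem, hfadd, (hKmem x).mp hx, (hKmem y).mp hy]
    have hreindex : (∑ s ∈ Kf, (if Algebra.trace (ZMod 2) F (c * s) = 0 then (1:ℤ) else -1))
        = ∑ s ∈ Kf, (if Algebra.trace (ZMod 2) F (c * (s + s0)) = 0 then (1:ℤ) else -1) := by
      apply Finset.sum_nbij' (i := fun s => s + s0) (j := fun s => s + s0)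
      · intro s hs; exact hKadd s hs s0 hs0
      · intro s hs; exact hKadd s hs s0 hs0
      · intro s _; rw [add_assoc, CharTwo.add_self_eq_zero, add_zero]
      · intro s _; rw [add_assoc, CharTwo.add_self_eq_zero, add_zero]
      · intro s _
        congr 2
        rw [add_assoc, CharTwo.add_self_eq_zero, add_zero]
    have hpt : ∀ s : F, (if Algebra.trace (ZMod 2) F (c * (s + s0)) = 0 then (1:ℤ) else -1)
        = -(if Algebra.trace (ZMod 2) F (c * s) = 0 then (1:ℤ) else -1) := by
      intro s
      have hadd : Algebra.trace (ZMod 2) F (c * (s + s0))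
          = Algebra.trace (ZMod 2) F (c * s) + Algebra.trace (ZMod 2) F (c * s0) := by
        rw [mul_add, map_add]
      rw [hadd, hflip _ hcs0]
      by_cases hcs : Algebra.trace (ZMod 2) F (c * s) = 0
      · rw [if_pos hcs, if_neg (by rw [hcs, zero_add]; exact one_ne_zero)]
      · rw [if_neg hcs, if_pos (by rw [hflip _ hcs]; exact CharTwo.add_self_eq_zero 1)]
        norm_num
    rw [Finset.sum_congr rfl (fun s _ => hpt s), Finset.sum_neg_distrib] at hreindex
    linarith
  -- inner sum evaluation
  have hinner : ∀ c : F, c ≠ 0 →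
      (∑ j1 ∈ range N1, (if Algebra.trace (ZMod 2) F (c * g ^ (N2 * j1)) = 0 then (1:ℤ) else -1))
        = if c ^ (2 ^ k) = c then (N1 : ℤ) else -1 := by
    intro c hc
    have hsum_img : (∑ s ∈ Kimg, (if Algebra.trace (ZMod 2) F (c * s) = 0 then (1:ℤ) else -1))
        = ∑ j1 ∈ range N1, (if Algebra.trace (ZMod 2) F (c * g ^ (N2 * j1)) = 0 then (1:ℤ) else -1) := by
      rw [hKimg]
      exact Finset.sum_image (fun x hx y hy hxy => hinjK x hx y hy hxy)
    have hsplit : (∑ s ∈ Kf, (if Algebra.trace (ZMod 2) F (c * s) = 0 then (1:ℤ) else -1))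
        = 1 + ∑ s ∈ Kimg, (if Algebra.trace (ZMod 2) F (c * s) = 0 then (1:ℤ) else -1) := by
      rw [hKeq, Finset.sum_insert h0nimg, mul_zero, map_zero, if_pos rfl]
    by_cases hck : c ^ (2 ^ k) = c
    · rw [if_pos hck]
      have hall1 : ∀ s ∈ Kf, (if Algebra.trace (ZMod 2) F (c * s) = 0 then (1:ℤ) else -1) = 1 := by
        intro s hs
        rw [if_pos]
        apply htrK
        rw [hKmem, mul_pow, hck, (hKmem s).mp hs]
      have : (∑ s ∈ Kf, (if Algebra.trace (ZMod 2) F (c * s) = 0 then (1:ℤ) else -1))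
          = 2 ^ k := by
        rw [Finset.sum_congr rfl hall1, Finset.sum_const, hKcard]
        simp
      rw [this] at hsplit
      have hN1cast : (N1 : ℤ) = 2 ^ k - 1 := by
        rw [hN1]
        push_cast [Nat.cast_sub hx1]
        ring
      rw [← hsum_img, hN1cast]
      linarith
    · rw [if_neg hck]
      have hex : ∃ s0 ∈ Kf, Algebra.trace (ZMod 2) F (c * s0) ≠ 0 := by
        by_contra hno
        push_neg at hno
        exact hck (hD c hno)
      obtain ⟨s0, hs0, hcs0⟩ := hex
      have h0' := hbal c s0 hs0 hcs0
      rw [hsplit] at h0'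
      rw [← hsum_img]
      linarith
  -- exponent divisibility characterization
  have hNdvd : ∀ e : ℕ, (e * 2 ^ k ≡ e [MOD n]) ↔ N2 ∣ e := by
    intro e
    constructor
    · intro hz
      have hdd := hz.dvd
      have hcast : (↑e : ℤ) - ↑(e * 2 ^ k) = -(↑e * ↑N1) := by
        push_cast [hN1, Nat.cast_sub hx1]
        ring
      rw [hcast] at hdd
      have hdvd := dvd_neg.mp hdd
      have hnint : (↑n : ℤ) = ↑N1 * ↑N2 := by rw [hnN]; push_cast; ring
      rw [hnint] at hdvd
      rcases hdvd with ⟨c, hcc⟩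
      have hN1ne : (N1 : ℤ) ≠ 0 := by exact_mod_cast hN10.ne'
      have he : (e : ℤ) = N2 * c := mul_left_cancel₀ hN1ne (by linear_combination hcc)
      have : (N2 : ℤ) ∣ (e : ℤ) := ⟨c, he⟩
      exact_mod_cast this
    · rintro ⟨j, rfl⟩
      have hdv : N1 * N2 ∣ N2 * j * 2 ^ k - N2 * j := by
        obtain ⟨d, hd1, hd2⟩ : ∃ d, 2 ^ k = 1 + d ∧ N1 = d := ⟨2 ^ k - 1, by omega, by rw [hN1]⟩
        have heq2 : N2 * j * 2 ^ k - N2 * j = (N1 * N2) * j := by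
          rw [hd2, hd1]
          exact Nat.sub_eq_of_eq_add (by ring)
        rw [heq2]
        exact Dvd.intro j rfl
      have hle : N2 * j ≤ N2 * j * 2 ^ k := Nat.le_mul_of_pos_right _ (by positivity)
      rw [hnN]
      exact ((Nat.modEq_iff_dvd' hle).mpr hdv).symm
  have hcond : ∀ e : ℕ, (g ^ e) ^ (2 ^ k) = g ^ e ↔ N2 ∣ e := by
    intro e
    rw [← pow_mul, hgexp]
    exact hNdvd e
  obtain ⟨i0, hi0⟩ := hg a ha
  -- step 1 : split off x = 0 and index by powers of g
  have hstep1 : (∑ x : F, (if Algebra.trace (ZMod 2) F (a * x ^ h) = 0 then (1:ℤ) else -1))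
      = 1 + ∑ j ∈ range n, (if Algebra.trace (ZMod 2) F (a * g ^ (j * h)) = 0 then (1:ℤ) else -1) := by
    rw [← Finset.add_sum_erase _ _ (Finset.mem_univ (0:F))]
    congr 1
    · rw [zero_pow h0.ne', mul_zero, map_zero, if_pos rfl]
    · symm
      apply Finset.sum_bij (i := fun (j : ℕ) (_ : j ∈ range n) => g ^ j)
      · intro j _
        exact Finset.mem_erase.mpr ⟨hgne j, Finset.mem_univ _⟩
      · intro j1 hj1 j2 hj2 hj
        exact hmodsmall' n _ _ ((hgexp _ _).mp hj) (mem_range.mp hj1) (mem_range.mp hj2)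
      · intro x hx
        obtain ⟨nx, hnx⟩ := hg x (Finset.mem_erase.mp hx).1
        refine ⟨nx % n, mem_range.mpr (Nat.mod_lt _ hn0), ?_⟩
        rw [hnx]
        exact (hgexp _ _).mpr (Nat.mod_modEq nx n)
      · intro j _
        rw [pow_mul]
  -- step 2 : reindex over a product of ranges
  have hstep2 : (∑ j ∈ range n, (if Algebra.trace (ZMod 2) F (a * g ^ (j * h)) = 0 then (1:ℤ) else -1))
      = ∑ p ∈ range N2 ×ˢ range N1,
          (if Algebra.trace (ZMod 2) F (a * g ^ ((N1 * p.1 + N2 * p.2) * h)) = 0 then (1:ℤ) else -1) := by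
    symm
    apply Finset.sum_bij (i := fun (p : ℕ × ℕ) (_ : p ∈ range N2 ×ˢ range N1) => (N1 * p.1 + N2 * p.2) % n)
    · intro p _
      exact mem_range.mpr (Nat.mod_lt _ hn0)
    · intro p hp p' hp' heq
      simp only [Finset.mem_product, mem_range] at hp hp'
      have hMod : N1 * p.1 + N2 * p.2 ≡ N1 * p'.1 + N2 * p'.2 [MOD n] := heq
      have hp1 : p.1 = p'.1 := by
        have hm2 : N1 * p.1 + N2 * p.2 ≡ N1 * p'.1 + N2 * p'.2 [MOD N2] :=
          hMod.of_dvd (by rw [hnN]; exact dvd_mul_left N2 N1)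
        have d1 : N1 * p.1 + N2 * p.2 ≡ N1 * p.1 + 0 [MOD N2] :=
          Nat.ModEq.add_left _ (Nat.modEq_zero_iff_dvd.mpr ⟨p.2, rfl⟩)
        have d2 : N1 * p'.1 + N2 * p'.2 ≡ N1 * p'.1 + 0 [MOD N2] :=
          Nat.ModEq.add_left _ (Nat.modEq_zero_iff_dvd.mpr ⟨p'.2, rfl⟩)
        have e1 := (d1.symm.trans hm2).trans d2
        rw [add_zero, add_zero] at e1
        have e2 := Nat.ModEq.cancel_left_of_coprime cop e1
        exact hmodsmall' N2 _ _ e2 hp.1 hp'.1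
      have hp2 : p.2 = p'.2 := by
        have hm1 : N1 * p.1 + N2 * p.2 ≡ N1 * p'.1 + N2 * p'.2 [MOD N1] :=
          hMod.of_dvd (by rw [hnN]; exact dvd_mul_right N1 N2)
        have d1 : N1 * p.1 + N2 * p.2 ≡ 0 + N2 * p.2 [MOD N1] :=
          Nat.ModEq.add_right _ (Nat.modEq_zero_iff_dvd.mpr ⟨p.1, rfl⟩)
        have d2 : N1 * p'.1 + N2 * p'.2 ≡ 0 + N2 * p'.2 [MOD N1] :=
          Nat.ModEq.add_right _ (Nat.modEq_zero_iff_dvd.mpr ⟨p'.1, rfl⟩)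
        have e1 := (d1.symm.trans hm1).trans d2
        rw [zero_add, zero_add] at e1
        have e2 := Nat.ModEq.cancel_left_of_coprime (Nat.Coprime.symm cop) e1
        exact hmodsmall' N1 _ _ e2 hp.2 hp'.2
      exact Prod.ext hp1 hp2
    · intro b hb
      have hcards : (range n).card ≤ (range N2 ×ˢ range N1).card := by
        rw [Finset.card_product, Finset.card_range, Finset.card_range, Finset.card_range, hnN,
          mul_comm]
      have := Finset.surj_on_of_inj_on_of_card_le
        (f := fun (p : ℕ × ℕ) (_ : p ∈ range N2 ×ˢ range N1) => (N1 * p.1 + N2 * p.2) % n)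
        (fun p _ => mem_range.mpr (Nat.mod_lt _ hn0))
        ?_ hcards b hb
      · obtain ⟨p, hp, hpb⟩ := this
        exact ⟨p, hp, hpb.symm⟩
      · intro p p' hp hp' heq
        -- same injectivity as above; reuse by calling the proof again
        simp only [Finset.mem_product, mem_range] at hp hp'
        have hMod : N1 * p.1 + N2 * p.2 ≡ N1 * p'.1 + N2 * p'.2 [MOD n] := heq
        have hp1 : p.1 = p'.1 := by
          have hm2 : N1 * p.1 + N2 * p.2 ≡ N1 * p'.1 + N2 * p'.2 [MOD N2] :=
            hMod.of_dvd (by rw [hnN]; exact dvd_mul_left N2 N1)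
          have d1 : N1 * p.1 + N2 * p.2 ≡ N1 * p.1 + 0 [MOD N2] :=
            Nat.ModEq.add_left _ (Nat.modEq_zero_iff_dvd.mpr ⟨p.2, rfl⟩)
          have d2 : N1 * p'.1 + N2 * p'.2 ≡ N1 * p'.1 + 0 [MOD N2] :=
            Nat.ModEq.add_left _ (Nat.modEq_zero_iff_dvd.mpr ⟨p'.2, rfl⟩)
          have e1 := (d1.symm.trans hm2).trans d2
          rw [add_zero, add_zero] at e1
          have e2 := Nat.ModEq.cancel_left_of_coprime cop e1
          exact hmodsmall' N2 _ _ e2 hp.1 hp'.1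
        have hp2 : p.2 = p'.2 := by
          have hm1 : N1 * p.1 + N2 * p.2 ≡ N1 * p'.1 + N2 * p'.2 [MOD N1] :=
            hMod.of_dvd (by rw [hnN]; exact dvd_mul_right N1 N2)
          have d1 : N1 * p.1 + N2 * p.2 ≡ 0 + N2 * p.2 [MOD N1] :=
            Nat.ModEq.add_right _ (Nat.modEq_zero_iff_dvd.mpr ⟨p.1, rfl⟩)
          have d2 : N1 * p'.1 + N2 * p'.2 ≡ 0 + N2 * p'.2 [MOD N1] :=
            Nat.ModEq.add_right _ (Nat.modEq_zero_iff_dvd.mpr ⟨p'.1, rfl⟩)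
          have e1 := (d1.symm.trans hm1).trans d2
          rw [zero_add, zero_add] at e1
          have e2 := Nat.ModEq.cancel_left_of_coprime (Nat.Coprime.symm cop) e1
          exact hmodsmall' N1 _ _ e2 hp.2 hp'.2
        exact Prod.ext hp1 hp2
    · intro p _
      rw [show g ^ ((N1 * p.1 + N2 * p.2) % n * h) = g ^ ((N1 * p.1 + N2 * p.2) * h) from
        (hgexp _ _).mpr ((Nat.mod_modEq _ n).mul_right h)]
  -- step 4 : evaluate the inner sums
  have hstep4 : ∀ j2, j2 < N2 →
      (∑ j1 ∈ range N1,
        (if Algebra.trace (ZMod 2) F (a * g ^ ((N1 * j2 + N2 * j1) * h)) = 0 then (1:ℤ) else -1))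
      = if N2 ∣ (i0 + h * (N1 * j2)) then (N1 : ℤ) else -1 := by
    intro j2 _
    set c : F := a * g ^ (h * (N1 * j2)) with hcdef
    have hcne : c ≠ 0 := mul_ne_zero ha (hgne _)
    have hterm : ∀ j1 : ℕ, a * g ^ ((N1 * j2 + N2 * j1) * h) = c * g ^ (N2 * (h * j1)) := by
      intro j1
      rw [hcdef, mul_assoc, ← pow_add]
      congr 2
      ring
    rw [Finset.sum_congr rfl (fun j1 _ => by rw [hterm j1])]
    have hre : (∑ j1 ∈ range N1,
          (if Algebra.trace (ZMod 2) F (c * g ^ (N2 * (h * j1))) = 0 then (1:ℤ) else -1))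
        = ∑ j1 ∈ range N1, (if Algebra.trace (ZMod 2) F (c * g ^ (N2 * j1)) = 0 then (1:ℤ) else -1) := by
      apply Finset.sum_bij (i := fun (j1 : ℕ) (_ : j1 ∈ range N1) => (h * j1) % N1)
      · intro j1 _
        exact mem_range.mpr (Nat.mod_lt _ hN10)
      · intro a1 ha1 a2 ha2 hmodeq
        have hme : h * a1 ≡ h * a2 [MOD N1] := hmodeq
        have := Nat.ModEq.cancel_left_of_coprime (by rw [Nat.coprime_comm] at coph; exact coph) hme
        exact hmodsmall' N1 _ _ this (mem_range.mp ha1) (mem_range.mp ha2)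
      · intro b hb
        have := Finset.surj_on_of_inj_on_of_card_le
          (f := fun (j1 : ℕ) (_ : j1 ∈ range N1) => (h * j1) % N1)
          (fun j1 _ => mem_range.mpr (Nat.mod_lt _ hN10))
          (fun a1 a2 ha1 ha2 hmodeq => by
            have hme : h * a1 ≡ h * a2 [MOD N1] := hmodeq
            have := Nat.ModEq.cancel_left_of_coprime (by rw [Nat.coprime_comm] at coph; exact coph) hme
            exact hmodsmall' N1 _ _ this (mem_range.mp ha1) (mem_range.mp ha2))
          le_rfl b hb
        obtain ⟨j1, hj1, hjb⟩ := this
        exact ⟨j1, hj1, hjb.symm⟩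
      · intro j1 _
        have h5 : N2 * ((h * j1) % N1) ≡ N2 * (h * j1) [MOD N2 * N1] :=
          Nat.ModEq.mul_left' N2 (Nat.mod_modEq (h * j1) N1)
        rw [mul_comm N2 N1, ← hnN] at h5
        rw [show g ^ (N2 * (h * j1 % N1)) = g ^ (N2 * (h * j1)) from (hgexp _ _).mpr h5]
    rw [hre, hinner c hcne]
    have hceq : c = g ^ (i0 + h * (N1 * j2)) := by
      rw [hcdef, hi0, ← pow_add]
    rw [hceq, if_congr (hcond _) rfl rfl]
  -- put everything together
  have hmain : (∑ x : F, (if Algebra.trace (ZMod 2) F (a * x ^ h) = 0 then (1:ℤ) else -1))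
      = 1 + ∑ j2 ∈ range N2, (if N2 ∣ (i0 + h * (N1 * j2)) then (N1 : ℤ) else -1) := by
    rw [hstep1, hstep2, Finset.sum_product]
    congr 1
    exact Finset.sum_congr rfl (fun j2 hj2 => hstep4 j2 (mem_range.mp hj2))
  -- counting setup
  have hcount := Finset.card_filter_add_card_filter_not
    (s := range N2) (p := fun j2 => N2 ∣ (i0 + h * (N1 * j2)))
  have hsum_if : (∑ j2 ∈ range N2, (if N2 ∣ (i0 + h * (N1 * j2)) then (N1 : ℤ) else -1))
      = (((range N2).filter (fun j2 => N2 ∣ (i0 + h * (N1 * j2)))).card : ℤ) * (N1 : ℤ)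
        - (((range N2).filter (fun j2 => ¬ N2 ∣ (i0 + h * (N1 * j2)))).card : ℤ) := by
    rw [Finset.sum_ite, Finset.sum_const, Finset.sum_const]
    push_cast
    ring
  have hN1c : ((N1 : ℕ) : ℤ) = 2 ^ k - 1 := by
    rw [hN1, Nat.cast_sub hx1]
    push_cast
    ring
  have hN2c : ((N2 : ℕ) : ℤ) = 2 ^ k + 1 := by
    rw [hN2]
    push_cast [hN2]
    ring
  have hhle : h ≤ N2 := Nat.le_of_dvd hN20 hh
  -- the power-residue condition in terms of i0
  have hiff : (∃ i : ℕ, a = g ^ (h * i)) ↔ h ∣ i0 := by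
    constructor
    · rintro ⟨i, hi⟩
      have hme : i0 ≡ h * i [MOD n] := (hgexp _ _).mp (by rw [← hi0, hi])
      have hdd := hme.dvd
      have hhn' : (h : ℤ) ∣ (n : ℤ) := Int.natCast_dvd_natCast.mpr hhn
      have h1 : (h : ℤ) ∣ ((h * i : ℕ) : ℤ) := ⟨(i : ℤ), by push_cast; ring⟩
      have h3 : (h : ℤ) ∣ (((h * i : ℕ) : ℤ) - (((h * i : ℕ) : ℤ) - (i0 : ℤ))) :=
        dvd_sub h1 (hhn'.trans hdd)
      have h4 : (h : ℤ) ∣ (i0 : ℤ) := by simpa using h3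
      exact_mod_cast h4
    · rintro ⟨i1, hi1⟩
      exact ⟨i1, by rw [hi0, hi1]⟩
  constructor
  · -- case A : a is an h-th power
    intro hex
    obtain ⟨i1, hi1⟩ := hiff.mp hex
    obtain ⟨t, ht⟩ := hh
    have ht0 : 0 < t := by
      rcases Nat.eq_zero_or_pos t with rfl | ht0
      · rw [Nat.mul_zero] at ht; omega
      · exact ht0
    haveI : NeZero t := ⟨ht0.ne'⟩
    have htd : t ∣ N2 := ⟨h, by rw [ht, mul_comm]⟩
    have hcopt : Nat.Coprime N1 t := Nat.Coprime.coprime_dvd_right htd (Nat.Coprime.symm cop)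
    have hu : IsUnit ((N1 : ZMod t)) := (ZMod.isUnit_iff_coprime N1 t).mpr hcopt
    obtain ⟨v, hv⟩ := hu
    set w : ZMod t := ((v⁻¹ : (ZMod t)ˣ) : ZMod t) * (-(i1 : ZMod t)) with hw
    have hcondj : ∀ j2 : ℕ, (N2 ∣ (i0 + h * (N1 * j2))) ↔ j2 % t = w.val := by
      intro j2
      have hfac : i0 + h * (N1 * j2) = h * (i1 + N1 * j2) := by rw [hi1]; ring
      have hdvd_iff : (N2 ∣ (i0 + h * (N1 * j2))) ↔ t ∣ (i1 + N1 * j2) := by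
        rw [hfac, ht]
        exact mul_dvd_mul_iff_left (by exact_mod_cast h0.ne' : (h : ℕ) ≠ 0)
      rw [hdvd_iff]
      constructor
      · intro hdt
        have h0' : ((i1 + N1 * j2 : ℕ) : ZMod t) = 0 :=
          (ZMod.natCast_eq_zero_iff _ _).mpr hdt
        push_cast at h0'
        have hNj : (N1 : ZMod t) * (j2 : ZMod t) = -(i1 : ZMod t) :=
          eq_neg_of_add_eq_zero_right (by linear_combination h0')
        have hj2 : ((j2 : ZMod t)) = w := by
          rw [hw]
          calc (j2 : ZMod t) = ((v⁻¹ : (ZMod t)ˣ) : ZMod t) * ((v : ZMod t) * (j2 : ZMod t)) := by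
                rw [← mul_assoc, Units.inv_mul, one_mul]
            _ = ((v⁻¹ : (ZMod t)ˣ) : ZMod t) * (-(i1 : ZMod t)) := by rw [hv, hNj]
        rw [← hj2, ZMod.val_natCast]
      · intro hmod
        have hj2 : ((j2 : ZMod t)) = w := by
          have hcastmod : ((j2 % t : ℕ) : ZMod t) = (j2 : ZMod t) := ZMod.natCast_mod j2 t
          rw [← hcastmod, hmod, ZMod.natCast_zmod_val]
        apply (ZMod.natCast_eq_zero_iff _ _).mp
        push_cast
        rw [hj2, hw, ← hv, ← mul_assoc, Units.mul_inv, one_mul]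
        ring
    have hfilter_eq : (range N2).filter (fun j2 => N2 ∣ (i0 + h * (N1 * j2)))
        = (range (h * t)).filter (fun j => j % t = w.val) := by
      calc (range N2).filter (fun j2 => N2 ∣ (i0 + h * (N1 * j2)))
          = (range N2).filter (fun j => j % t = w.val) :=
            Finset.filter_congr (fun x _ => hcondj x)
        _ = (range (h * t)).filter (fun j => j % t = w.val) := by rw [← ht]
    have hZ : ((range N2).filter (fun j2 => N2 ∣ (i0 + h * (N1 * j2)))).card = h := by
      rw [hfilter_eq]
      exact count_mod_aux t h w.val ht0 (ZMod.val_lt w)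
    have hcardneg : (((range N2).filter (fun j2 => ¬ N2 ∣ (i0 + h * (N1 * j2)))).card : ℤ)
        = (N2 : ℤ) - h := by
      rw [Finset.card_range] at hcount
      rw [hZ] at hcount
      omega
    rw [hmain, hsum_if, hZ, hcardneg, hN1c, hN2c]
    ring
  · -- case B : a is not an h-th power
    intro hnex
    have hndvd : ¬ h ∣ i0 := fun hd => hnex (hiff.mpr hd)
    have hZ : ((range N2).filter (fun j2 => N2 ∣ (i0 + h * (N1 * j2)))).card = 0 := by
      rw [Finset.card_eq_zero]
      apply Finset.filter_eq_empty_iff.mpr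
      intro j2 _ hdvd
      apply hndvd
      have h1 : h ∣ (i0 + h * (N1 * j2)) := (hh).trans hdvd
      have h2 : h ∣ h * (N1 * j2) := dvd_mul_right _ _
      have := Nat.dvd_sub h1 h2
      rwa [Nat.add_sub_cancel] at this
    have hcardneg : (((range N2).filter (fun j2 => ¬ N2 ∣ (i0 + h * (N1 * j2)))).card : ℤ)
        = (N2 : ℤ) := by
      rw [Finset.card_range] at hcount
      rw [hZ] at hcount
      omega
    rw [hmain, hsum_if, hZ, hcardneg, hN1c, hN2c]
    ring
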